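/- Let τ, τ₀ ∈ [0, π] and ρ ∈ [0, 1] satisfy ρ cos τ = cos τ₀. Then ρ² (τ − sin τ cos τ) + π (1 − ρ²) ≥ τ₀ − sin τ₀ cos τ₀. -/

import Mathlib

open Real

private lemma hasDerivAt_f (x : ℝ) :
    HasDerivAt (fun t : ℝ => t - Real.sin t * Real.cos t) (2 * Real.sin x ^ 2) x := by
  have h := (hasDerivAt_id x).sub ((Real.hasDerivAt_sin x).mul (Real.hasDerivAt_cos x))
  refine h.congr_deriv ?_
  have := Real.sin_sq_add_cos_sq x
  nlinarith [this]

private lemma f_mono : Monotone (fun t : ℝ => t - Real.sin t * Real.cos t) := by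
  apply monotone_of_deriv_nonneg
  · exact fun x => (hasDerivAt_f x).differentiableAt
  · intro x
    rw [(hasDerivAt_f x).deriv]
    positivity

private lemma f_nonneg {t : ℝ} (ht : 0 ≤ t) : 0 ≤ t - Real.sin t * Real.cos t := by
  have := f_mono ht
  simpa using this

private lemma key (σ σ₀ ρ : ℝ) (hσ : σ ∈ Set.Icc 0 π) (hσ₀ : σ₀ ∈ Set.Icc 0 π)
    (hρ : ρ ∈ Set.Icc (0 : ℝ) 1) (h : ρ * Real.cos σ = Real.cos σ₀) :
    ρ ^ 2 * (σ - Real.sin σ * Real.cos σ) ≤ σ₀ - Real.sin σ₀ * Real.cos σ₀ := by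
  obtain ⟨hσ1, hσ2⟩ := hσ
  obtain ⟨hσ₀1, hσ₀2⟩ := hσ₀
  obtain ⟨hρ1, hρ2⟩ := hρ
  rcases le_or_gt 0 (Real.cos σ) with hc | hc
  · -- cos σ ≥ 0 : then cos σ₀ ≤ cos σ, so σ ≤ σ₀ and f σ ≤ f σ₀
    have hle : Real.cos σ₀ ≤ Real.cos σ := by nlinarith
    have hσle : σ ≤ σ₀ := by
      by_contra hcon
      push_neg at hcon
      have := Real.strictAntiOn_cos ⟨hσ₀1, hσ₀2⟩ ⟨hσ1, hσ2⟩ hcon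
      linarith
    have hf := f_mono hσle
    simp only at hf
    have hfn := f_nonneg hσ1
    have hρsq : ρ ^ 2 ≤ 1 := by nlinarith
    calc ρ ^ 2 * (σ - Real.sin σ * Real.cos σ) ≤ σ - Real.sin σ * Real.cos σ := by nlinarith
      _ ≤ σ₀ - Real.sin σ₀ * Real.cos σ₀ := hf
  · -- cos σ < 0
    rcases eq_or_lt_of_le hρ1 with hρ0 | hρ0
    · -- ρ = 0
      have : ρ ^ 2 * (σ - Real.sin σ * Real.cos σ) = 0 := by rw [← hρ0]; ring
      rw [this]
      exact f_nonneg hσ₀1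
    · -- ρ > 0, so cos σ₀ < 0, π/2 < σ₀ ≤ σ
      have hc0 : Real.cos σ₀ < 0 := by nlinarith
      have hcle : Real.cos σ ≤ Real.cos σ₀ := by nlinarith
      have hσ₀le : σ₀ ≤ σ := by
        by_contra hcon
        push_neg at hcon
        have := Real.strictAntiOn_cos ⟨hσ1, hσ2⟩ ⟨hσ₀1, hσ₀2⟩ hcon
        linarith
      -- cos is negative on all of Icc σ₀ σ
      have hcneg : ∀ t ∈ Set.Icc σ₀ σ, Real.cos t < 0 := by
        intro t ⟨ht1, ht2⟩
        rcases eq_or_lt_of_le ht1 with rfl | ht1'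
        · exact hc0
        · have : Real.cos t < Real.cos σ₀ :=
            Real.strictAntiOn_cos ⟨hσ₀1, hσ₀2⟩ ⟨by linarith, by linarith⟩ ht1'
          linarith
      set h : ℝ → ℝ := fun t => (t - Real.sin t * Real.cos t) / (Real.cos t) ^ 2 with hh
      have hder : ∀ t : ℝ, Real.cos t ≠ 0 →
          HasDerivAt h ((2 * Real.sin t ^ 2 * Real.cos t ^ 2 -
            (t - Real.sin t * Real.cos t) * ((2 : ℕ) * Real.cos t ^ 1 * (-Real.sin t))) /
            ((Real.cos t) ^ 2) ^ 2) t := by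
        intro t hct
        exact (hasDerivAt_f t).div ((Real.hasDerivAt_cos t).pow 2) (pow_ne_zero 2 hct)
      have hanti : AntitoneOn h (Set.Icc σ₀ σ) := by
        apply antitoneOn_of_deriv_nonpos (convex_Icc σ₀ σ)
        · intro t ht
          exact ((hder t (ne_of_lt (hcneg t ht))).continuousAt).continuousWithinAt
        · intro t ht
          rw [interior_Icc] at ht
          have := hder t (ne_of_lt (hcneg t ⟨le_of_lt ht.1, le_of_lt ht.2⟩))
          exact this.differentiableAt.differentiableWithinAt
        · intro t ht
          rw [interior_Icc] at ht
          have htmem : t ∈ Set.Icc σ₀ σ := ⟨le_of_lt ht.1, le_of_lt ht.2⟩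
          have hct := hcneg t htmem
          rw [(hder t (ne_of_lt hct)).deriv]
          have hst : 0 < Real.sin t := by
            apply Real.sin_pos_of_pos_of_lt_pi
            · linarith [ht.1, hσ₀1]
            · exact lt_of_lt_of_le ht.2 hσ2
          have ht0 : 0 < t := by linarith [ht.1, hσ₀1,
            show (0:ℝ) < t from lt_of_le_of_lt hσ₀1 ht.1]
          apply div_nonpos_of_nonpos_of_nonneg
          · have : (2 * Real.sin t ^ 2 * Real.cos t ^ 2 -
                (t - Real.sin t * Real.cos t) * ((2 : ℕ) * Real.cos t ^ 1 * (-Real.sin t)))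
                = 2 * t * Real.sin t * Real.cos t := by push_cast; ring
            rw [this]
            have : 0 < 2 * t * Real.sin t := by positivity
            nlinarith
          · positivity
      have hineq := hanti (Set.left_mem_Icc.mpr hσ₀le) (Set.right_mem_Icc.mpr hσ₀le) hσ₀le
      -- hineq : h σ ≤ h σ₀
      have hcσ2 : 0 < Real.cos σ ^ 2 := pow_two_pos_of_ne_zero (ne_of_lt hc)
      have hcσ₀2 : 0 < Real.cos σ₀ ^ 2 := pow_two_pos_of_ne_zero (ne_of_lt hc0)
      have hmul : (σ - Real.sin σ * Real.cos σ) * Real.cos σ₀ ^ 2 ≤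
          (σ₀ - Real.sin σ₀ * Real.cos σ₀) * Real.cos σ ^ 2 := by
        rw [hh] at hineq
        simp only at hineq
        exact (div_le_div_iff₀ hcσ2 hcσ₀2).mp hineq
      have hsq : ρ ^ 2 * Real.cos σ ^ 2 = Real.cos σ₀ ^ 2 := by nlinarith [h]
      have hfinal : ρ ^ 2 * (σ - Real.sin σ * Real.cos σ) * Real.cos σ ^ 2 ≤
          (σ₀ - Real.sin σ₀ * Real.cos σ₀) * Real.cos σ ^ 2 := by
        calc ρ ^ 2 * (σ - Real.sin σ * Real.cos σ) * Real.cos σ ^ 2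
            = (σ - Real.sin σ * Real.cos σ) * (ρ ^ 2 * Real.cos σ ^ 2) := by ring
          _ = (σ - Real.sin σ * Real.cos σ) * Real.cos σ₀ ^ 2 := by rw [hsq]
          _ ≤ (σ₀ - Real.sin σ₀ * Real.cos σ₀) * Real.cos σ ^ 2 := hmul
      exact le_of_mul_le_mul_right hfinal hcσ2

/-- For `τ, τ₀ ∈ [0, π]`, `ρ ∈ [0, 1]` with `ρ cos τ = cos τ₀`, we have
`ρ² (τ − sin τ cos τ) + π (1 − ρ²) ≥ τ₀ − sin τ₀ cos τ₀`. -/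
theorem action_inequality (τ τ₀ ρ : ℝ) (hτ : τ ∈ Set.Icc 0 π) (hτ₀ : τ₀ ∈ Set.Icc 0 π)
    (hρ : ρ ∈ Set.Icc (0 : ℝ) 1) (h : ρ * cos τ = cos τ₀) :
    τ₀ - sin τ₀ * cos τ₀ ≤ ρ ^ 2 * (τ - sin τ * cos τ) + π * (1 - ρ ^ 2) := by
  have hk := key (π - τ) (π - τ₀) ρ
    ⟨by linarith [hτ.2], by linarith [hτ.1]⟩
    ⟨by linarith [hτ₀.2], by linarith [hτ₀.1]⟩ hρ
    (by rw [Real.cos_pi_sub, Real.cos_pi_sub]; linarith [h])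
  rw [Real.sin_pi_sub, Real.cos_pi_sub, Real.sin_pi_sub, Real.cos_pi_sub] at hk
  nlinarith [hk]
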